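/- Let X be a finitely ramified fractal and k ∈ ℕ such that, for every n, no two disjoint n-cells of X both intersect a common (n+k)-cell. Let α be a real number with 1 < α ≤ (3/2)^{1/k}. Then the function d_α defined by d_α(p,q) = inf { Σ_{i=1}^{l} α^{−|E_i|} : E_1,…,E_l is a cell chain connecting p and q } is a metric on X, and for every pair of distinct points p, q ∈ X one has d_α(p,q) ≥ α^{1−P(p,q)−k}, where P(p,q) denotes the least integer n such that p and q are not contained in any intersecting pair of n-cells (E_x, E_y) with p ∈ E_x and q ∈ E_y (such an n exists by the cell structure axioms). -/

import Mathlib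

open Set

/-- A finitely ramified cell structure on a topological space `X`: a locally finite,
level-indexed family of "cells", where each cell is compact, connected, with nonempty
interior, the unique `0`-cell is all of `X`, every `(n+1)`-cell lies in some `n`-cell,
each `n`-cell is the union of the `(n+1)`-cells it contains, two distinct cells of the
same level meet in a finite set, and every infinite descending chain of cells
intersects in a single point. -/
structure CellStructure (X : Type*) [TopologicalSpace X] where
  cells : ℕ → Set (Set X)
  finite_cells : ∀ n, (cells n).Finite
  isCompact_cells : ∀ n, ∀ E ∈ cells n, IsCompact E
  isConnected_cells : ∀ n, ∀ E ∈ cells n, IsConnected E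
  interior_nonempty : ∀ n, ∀ E ∈ cells n, (interior E).Nonempty
  root : cells 0 = {Set.univ}
  exists_parent : ∀ n, ∀ E' ∈ cells (n + 1), ∃ E ∈ cells n, E' ⊆ E
  eq_sUnion_children : ∀ n, ∀ E ∈ cells n, E = ⋃₀ {E' | E' ∈ cells (n + 1) ∧ E' ⊆ E}
  inter_finite : ∀ n, ∀ E₁ ∈ cells n, ∀ E₂ ∈ cells n, E₁ ≠ E₂ → (E₁ ∩ E₂).Finite
  descending_singleton : ∀ E : ℕ → Set X, (∀ n, E n ∈ cells n) → (∀ n, E (n + 1) ⊆ E n) →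
    ∃ p : X, (⋂ n, E n) = {p}

/-- `d` is a metric (distance function) on the set `X`. -/
def IsMetricOn {X : Type*} (d : X → X → ℝ) : Prop :=
  (∀ x y, 0 ≤ d x y) ∧ (∀ x y, d x y = 0 ↔ x = y) ∧ (∀ x y, d x y = d y x) ∧
    ∀ x y z, d x z ≤ d x y + d y z

/-- The distance function `d` induces the given topology on `X`. -/
def InducesTopology {X : Type*} [TopologicalSpace X] (d : X → X → ℝ) : Prop :=
  ∀ s : Set X, IsOpen s ↔ ∀ x ∈ s, ∃ ε > 0, ∀ y, d x y < ε → y ∈ s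

/-- The diameter of a set with respect to a distance function. -/
noncomputable def sdiam {X : Type*} (d : X → X → ℝ) (S : Set X) : ℝ :=
  sSup (Set.image2 d S S)

/-- The distance between two sets with respect to a distance function. -/
noncomputable def sdist {X : Type*} (d : X → X → ℝ) (S T : Set X) : ℝ :=
  sInf (Set.image2 d S T)

/-- The distance function `d` is `(r,R,C,δ)`-undistorted with respect to the family
of cells `cells`: exponential decay of diameter ratios of intersecting cells, and
cell separation for disjoint cells of the same level. -/
def IsUndistortedWith {X : Type*} (cells : ℕ → Set (Set X)) (d : X → X → ℝ)
    (r R C δ : ℝ) : Prop :=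
  0 < r ∧ r ≤ R ∧ R < 1 ∧ 1 ≤ C ∧ 0 < δ ∧
    (∀ m n : ℕ, m ≤ n → ∀ E ∈ cells m, ∀ E' ∈ cells n, (E ∩ E').Nonempty →
      r ^ (n - m) / C ≤ sdiam d E' / sdiam d E ∧
        sdiam d E' / sdiam d E ≤ C * R ^ (n - m)) ∧
    ∀ n : ℕ, ∀ E₁ ∈ cells n, ∀ E₂ ∈ cells n, Disjoint E₁ E₂ →
      δ * sdiam d E₁ ≤ sdist d E₁ E₂

/-- `d` is undistorted if it is `(r,R,C,δ)`-undistorted for some constants. -/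
def IsUndistorted {X : Type*} (cells : ℕ → Set (Set X)) (d : X → X → ℝ) : Prop :=
  ∃ r R C δ : ℝ, IsUndistortedWith cells d r R C δ

/-- `η` is a homeomorphism of `[0,∞)` onto itself (equivalently: a continuous,
strictly increasing surjection of `[0,∞)` onto `[0,∞)` fixing `0`). -/
def IsQSGauge (η : ℝ → ℝ) : Prop :=
  ContinuousOn η (Set.Ici 0) ∧ StrictMonoOn η (Set.Ici 0) ∧ η 0 = 0 ∧
    Set.MapsTo η (Set.Ici 0) (Set.Ici 0) ∧ Set.SurjOn η (Set.Ici 0) (Set.Ici 0)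

/-- The `η`-quasisymmetry inequality for a map `f` between sets carrying
distance functions `dX` and `dY`. -/
def QSIneq {X Y : Type*} (dX : X → X → ℝ) (dY : Y → Y → ℝ) (f : X → Y) (η : ℝ → ℝ) : Prop :=
  ∀ a b c : X, a ≠ b → a ≠ c → b ≠ c →
    dY (f a) (f b) / dY (f a) (f c) ≤ η (dX a b / dX a c)


/-- The weight `Σ α^{-|E_i|}` of a chain of cells, each recorded with its level. -/
noncomputable def chainWeight {X : Type*} (α : ℝ) (c : List (ℕ × Set X)) : ℝ :=
  (c.map fun e => α ^ (-(e.1 : ℤ))).sum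

/-- `c` is a cell chain connecting `p` to `q`: a nonempty finite sequence of cells
(recorded with their levels) with `p` in the first cell, `q` in the last one, and
consecutive cells intersecting. -/
def IsCellChain {X : Type*} [TopologicalSpace X] (CS : CellStructure X) (p q : X)
    (c : List (ℕ × Set X)) : Prop :=
  c ≠ [] ∧ (∀ e ∈ c, e.2 ∈ CS.cells e.1) ∧
    (∃ e, c.head? = some e ∧ p ∈ e.2) ∧ (∃ e, c.getLast? = some e ∧ q ∈ e.2) ∧
    List.Chain' (fun e f => (e.2 ∩ f.2).Nonempty) c

/-- The distance function `d_α(p,q) = inf { Σ α^{-|E_i|} }` over all cell chains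
connecting `p` and `q`. -/
noncomputable def dAlpha {X : Type*} [TopologicalSpace X] (CS : CellStructure X)
    (α : ℝ) (p q : X) : ℝ :=
  sInf {s : ℝ | ∃ c : List (ℕ × Set X), IsCellChain CS p q c ∧ chainWeight α c = s}

/-- No intersecting pair of `n`-cells contains `p` and `q` respectively. -/
def NoPairAt {X : Type*} [TopologicalSpace X] (CS : CellStructure X) (p q : X)
    (n : ℕ) : Prop :=
  ∀ Ex ∈ CS.cells n, ∀ Ey ∈ CS.cells n, p ∈ Ex → q ∈ Ey → ¬(Ex ∩ Ey).Nonempty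


set_option linter.unusedSectionVars false
namespace Stmt6Aux

variable {X : Type*} [TopologicalSpace X] (CS : CellStructure X)

lemma exists_cell (n : ℕ) (x : X) : ∃ E ∈ CS.cells n, x ∈ E := by
  induction n with
  | zero => exact ⟨Set.univ, by simp [CS.root], trivial⟩
  | succ n ih =>
    obtain ⟨E, hE, hx⟩ := ih
    rw [CS.eq_sUnion_children n E hE] at hx
    obtain ⟨E', ⟨hE', _⟩, hx'⟩ := hx
    exact ⟨E', hE', hx'⟩

lemma descend (j n : ℕ) {E : Set X} (hE : E ∈ CS.cells n) {x : X} (hx : x ∈ E) :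
    ∃ E' ∈ CS.cells (n + j), x ∈ E' ∧ E' ⊆ E := by
  induction j with
  | zero => exact ⟨E, hE, hx, subset_rfl⟩
  | succ j ih =>
    obtain ⟨E', hE', hx', hsub⟩ := ih
    rw [CS.eq_sUnion_children _ E' hE'] at hx'
    obtain ⟨E'', ⟨hE'', hsub'⟩, hx''⟩ := hx'
    exact ⟨E'', hE'', hx'', hsub'.trans hsub⟩

lemma descend_le {m n : ℕ} (h : m ≤ n) {E : Set X} (hE : E ∈ CS.cells m) {x : X} (hx : x ∈ E) :
    ∃ E' ∈ CS.cells n, x ∈ E' ∧ E' ⊆ E := by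
  obtain ⟨j, rfl⟩ := Nat.exists_eq_add_of_le h
  exact Stmt6Aux.descend CS j m hE hx

lemma ancestor (j n : ℕ) {E : Set X} (hE : E ∈ CS.cells (n + j)) : ∃ F ∈ CS.cells n, E ⊆ F := by
  induction j generalizing E with
  | zero => exact ⟨E, hE, subset_rfl⟩
  | succ j ih =>
    obtain ⟨P, hP, hsub⟩ := CS.exists_parent (n + j) E hE
    obtain ⟨F, hF, hsub'⟩ := ih hP
    exact ⟨F, hF, hsub.trans hsub'⟩

lemma ancestor_le {m n : ℕ} (h : m ≤ n) {E : Set X} (hE : E ∈ CS.cells n) :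
    ∃ F ∈ CS.cells m, E ⊆ F := by
  obtain ⟨j, rfl⟩ := Nat.exists_eq_add_of_le h
  exact Stmt6Aux.ancestor CS j m hE

variable {k : ℕ}

/-- Mixed-level version of the hypothesis `hk`. -/
lemma no_both
    (hk : ∀ n : ℕ, ∀ E₁ ∈ CS.cells n, ∀ E₂ ∈ CS.cells n, Disjoint E₁ E₂ →
      ∀ F ∈ CS.cells (n + k), ¬((E₁ ∩ F).Nonempty ∧ (E₂ ∩ F).Nonempty))
    {u v : ℕ} {A B : Set X} (hA : A ∈ CS.cells u) (hB : B ∈ CS.cells v)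
    (hAB : Disjoint A B) {F : Set X} (hF : F ∈ CS.cells (max u v + k))
    (h1 : (F ∩ A).Nonempty) (h2 : (F ∩ B).Nonempty) : False := by
  obtain ⟨x, hxF, hxA⟩ := h1
  obtain ⟨y, hyF, hyB⟩ := h2
  obtain ⟨A', hA', hxA', hA's⟩ := Stmt6Aux.descend_le CS (le_max_left u v) hA hxA
  obtain ⟨B', hB', hyB', hB's⟩ := Stmt6Aux.descend_le CS (le_max_right u v) hB hyB
  exact hk (max u v) A' hA' B' hB' (hAB.mono hA's hB's) F hF ⟨⟨x, hxA', hxF⟩, ⟨y, hyB', hyF⟩⟩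


variable {X : Type*} [TopologicalSpace X] (CS : CellStructure X) {k : ℕ} {α : ℝ}

lemma chain_bound (hα : 1 < α) (hα2 : α ^ k ≤ 2)
    (hk : ∀ n : ℕ, ∀ E₁ ∈ CS.cells n, ∀ E₂ ∈ CS.cells n, Disjoint E₁ E₂ →
      ∀ F ∈ CS.cells (n + k), ¬((E₁ ∩ F).Nonempty ∧ (E₂ ∩ F).Nonempty)) :
    ∀ L l : ℕ, l ≤ L → ∀ f : ℕ → ℕ × Set X, ∀ u v : ℕ, ∀ A B : Set X,
    A ∈ CS.cells u → B ∈ CS.cells v → Disjoint A B → 1 ≤ l →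
    (∀ i < l, (f i).2 ∈ CS.cells (f i).1) →
    (A ∩ (f 0).2).Nonempty → (B ∩ (f (l - 1)).2).Nonempty →
    (∀ i, i + 1 < l → ((f i).2 ∩ (f (i + 1)).2).Nonempty) →
    α ^ (1 - ((max u v : ℕ) : ℤ) - (k : ℤ)) ≤ ∑ i ∈ Finset.range l, α ^ (-((f i).1 : ℤ)) := by
  classical
  have hα0 : (0:ℝ) < α := lt_trans one_pos hα
  intro L
  induction L with
  | zero => intro l hl f u v A B _ _ _ hl1; omega
  | succ L IH =>
    intro l hl f u v A B hA hB hAB hl1 hcells hfirst hlast hchain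
    set M := max u v with hM
    by_cases hdeep : ∀ i < l, M + k ≤ (f i).1
    · -- all cells are deep; pass to level-(M+k) ancestors
      have hanc : ∀ i, ∃ F, i < l → (F ∈ CS.cells (M + k) ∧ (f i).2 ⊆ F) := by
        intro i
        by_cases hi : i < l
        · obtain ⟨F, hF, hsub⟩ := ancestor_le CS (hdeep i hi) (hcells i hi)
          exact ⟨F, fun _ => ⟨hF, hsub⟩⟩
        · exact ⟨∅, fun h => absurd h hi⟩
      choose F hF using hanc
      -- predicates
      have hF0A : (F 0 ∩ A).Nonempty := by
        obtain ⟨x, hxA, hx0⟩ := hfirst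
        exact ⟨x, (hF 0 (by omega)).2 hx0, hxA⟩
      have hFlB : (F (l - 1) ∩ B).Nonempty := by
        obtain ⟨x, hxB, hx0⟩ := hlast
        exact ⟨x, (hF (l - 1) (by omega)).2 hx0, hxB⟩
      have key : ∀ i, i < l → (F i ∩ A).Nonempty → (F i ∩ B).Nonempty → False := by
        intro i hi h1 h2
        exact no_both CS hk hA hB hAB (hF i hi).1 h1 h2
      -- first index whose ancestor misses A
      have hexA : ∃ i, i < l ∧ ¬(F i ∩ A).Nonempty := by
        refine ⟨l - 1, by omega, fun h => key _ (by omega) h hFlB⟩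
      set a := Nat.find hexA with ha_def
      obtain ⟨hal, haA⟩ := Nat.find_spec hexA
      rw [← ha_def] at hal haA
      have haPA : ∀ i, i < a → (F i ∩ A).Nonempty := by
        intro i hia
        have := Nat.find_min hexA hia
        push_neg at this
        exact this (by omega)
      have ha1 : 1 ≤ a := by
        rcases Nat.eq_zero_or_pos a with h | h
        · rw [h] at haA; exact absurd hF0A haA
        · exact h
      -- last index whose ancestor misses B
      have hexB : ∃ j, j < l ∧ ¬(F (l - 1 - j) ∩ B).Nonempty := by
        refine ⟨l - 1, by omega, ?_⟩
        have : l - 1 - (l - 1) = 0 := by omega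
        rw [this]
        exact fun h => key 0 (by omega) hF0A h
      set d := Nat.find hexB with hd_def
      obtain ⟨hdl, hdB⟩ := Nat.find_spec hexB
      rw [← hd_def] at hdl hdB
      set b := l - 1 - d with hb_def
      have hbB : ¬(F b ∩ B).Nonempty := hdB
      have hd1 : 1 ≤ d := by
        rcases Nat.eq_zero_or_pos d with h | h
        · exfalso
          apply hdB
          have hb1 : b = l - 1 := by omega
          rw [hb1]
          exact hFlB
        · exact h
      have hl2 : 2 ≤ l := by omega
      have hb2 : b ≤ l - 2 := by omega
      have hbPB : ∀ i, b < i → i < l → (F i ∩ B).Nonempty := by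
        intro i hbi hil
        have hjd : l - 1 - i < d := by omega
        have := Nat.find_min hexB hjd
        push_neg at this
        have h2 := this (by omega)
        have : l - 1 - (l - 1 - i) = i := by omega
        rwa [this] at h2
      -- key: a ≤ b + 1
      have hab : a ≤ b + 1 := by
        by_contra hcon
        push_neg at hcon
        have h1 : (F (b + 1) ∩ A).Nonempty := haPA _ (by omega)
        have h2 : (F (b + 1) ∩ B).Nonempty := hbPB _ (by omega) (by omega)
        exact key (b + 1) (by omega) h1 h2
      -- subchain 1 : indices [0, a), joins A to F a
      have hFa : F a ∈ CS.cells (M + k) := (hF a hal).1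
      have hmax1 : max u (M + k) = M + k :=
        Nat.max_eq_right (le_trans (le_max_left u v) (Nat.le_add_right M k))
      have hlast1 : (F a ∩ (f (a - 1)).2).Nonempty := by
        obtain ⟨z, hz1, hz2⟩ := hchain (a - 1) (by omega)
        have : a - 1 + 1 = a := by omega
        rw [this] at hz2
        exact ⟨z, (hF a hal).2 hz2, hz1⟩
      have hd1' : Disjoint A (F a) := by
        rw [Set.not_nonempty_iff_eq_empty] at haA
        exact Set.disjoint_iff_inter_eq_empty.mpr (by rw [Set.inter_comm]; exact haA)
      have bound1 : α ^ (1 - ((M + k : ℕ) : ℤ) - (k : ℤ)) ≤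
          ∑ i ∈ Finset.range a, α ^ (-((f i).1 : ℤ)) := by
        have := IH a (by omega) f u (M + k) A (F a) hA hFa hd1' ha1
          (fun i hi => hcells i (by omega)) hfirst hlast1
          (fun i hi => hchain i (by omega))
        rwa [hmax1] at this
      -- subchain 2 : indices [b+1, l), joins F b to B
      have hFb : F b ∈ CS.cells (M + k) := (hF b (by omega)).1
      have hmax2 : max (M + k) v = M + k :=
        Nat.max_eq_left (le_trans (le_max_right u v) (Nat.le_add_right M k))
      set l₂ := l - 1 - b with hl₂
      have hl₂1 : 1 ≤ l₂ := by omega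
      have hfirst2 : ((F b) ∩ (f (b + 1 + 0)).2).Nonempty := by
        obtain ⟨z, hz1, hz2⟩ := hchain b (by omega)
        exact ⟨z, (hF b (by omega)).2 hz1, by simpa using hz2⟩
      have hlast2 : (B ∩ (f (b + 1 + (l₂ - 1))).2).Nonempty := by
        have : b + 1 + (l₂ - 1) = l - 1 := by omega
        rw [this]; exact hlast
      have hd2' : Disjoint (F b) B := by
        rw [Set.not_nonempty_iff_eq_empty] at hbB
        exact Set.disjoint_iff_inter_eq_empty.mpr hbB
      have bound2 : α ^ (1 - ((M + k : ℕ) : ℤ) - (k : ℤ)) ≤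
          ∑ i ∈ Finset.range l₂, α ^ (-((f (b + 1 + i)).1 : ℤ)) := by
        have := IH l₂ (by omega) (fun i => f (b + 1 + i)) (M + k) v (F b) B hFb hB hd2' hl₂1
          (fun i hi => hcells (b + 1 + i) (by omega)) hfirst2 hlast2
          (fun i hi => by
            have h := hchain (b + 1 + i) (by omega)
            have : b + 1 + i + 1 = b + 1 + (i + 1) := by omega
            rwa [this] at h)
        rwa [hmax2] at this
      -- combine
      have hsplit : l = (b + 1) + l₂ := by omega
      have hsum : ∑ i ∈ Finset.range l, α ^ (-((f i).1 : ℤ)) =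
          (∑ i ∈ Finset.range (b + 1), α ^ (-((f i).1 : ℤ))) +
            ∑ i ∈ Finset.range l₂, α ^ (-((f (b + 1 + i)).1 : ℤ)) := by
        rw [hsplit, Finset.sum_range_add]
      have hmono : ∑ i ∈ Finset.range a, α ^ (-((f i).1 : ℤ)) ≤
          ∑ i ∈ Finset.range (b + 1), α ^ (-((f i).1 : ℤ)) :=
        Finset.sum_le_sum_of_subset_of_nonneg
          (Finset.range_subset_range.mpr hab) (fun i _ _ => le_of_lt (zpow_pos hα0 _))
      have harith : α ^ (1 - ((M : ℕ) : ℤ) - (k : ℤ)) ≤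
          2 * α ^ (1 - ((M + k : ℕ) : ℤ) - (k : ℤ)) := by
        have hz : α ^ (1 - ((M : ℕ) : ℤ) - (k : ℤ)) =
            α ^ (k : ℤ) * α ^ (1 - ((M + k : ℕ) : ℤ) - (k : ℤ)) := by
          rw [← zpow_add₀ (ne_of_gt hα0)]
          congr 1
          push_cast
          ring
        rw [hz]
        have hαk : α ^ (k : ℤ) ≤ 2 := by rwa [zpow_natCast]
        exact mul_le_mul_of_nonneg_right hαk (le_of_lt (zpow_pos hα0 _))
      calc α ^ (1 - ((M : ℕ) : ℤ) - (k : ℤ))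
          ≤ 2 * α ^ (1 - ((M + k : ℕ) : ℤ) - (k : ℤ)) := harith
        _ = α ^ (1 - ((M + k : ℕ) : ℤ) - (k : ℤ)) + α ^ (1 - ((M + k : ℕ) : ℤ) - (k : ℤ)) := by
            ring
        _ ≤ (∑ i ∈ Finset.range a, α ^ (-((f i).1 : ℤ))) +
              ∑ i ∈ Finset.range l₂, α ^ (-((f (b + 1 + i)).1 : ℤ)) := by
            exact add_le_add bound1 bound2
        _ ≤ (∑ i ∈ Finset.range (b + 1), α ^ (-((f i).1 : ℤ))) +
              ∑ i ∈ Finset.range l₂, α ^ (-((f (b + 1 + i)).1 : ℤ)) := by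
            exact add_le_add_left hmono _
        _ = ∑ i ∈ Finset.range l, α ^ (-((f i).1 : ℤ)) := hsum.symm
    · -- some cell is shallow: a single term suffices
      push_neg at hdeep
      obtain ⟨i, hil, hi⟩ := hdeep
      calc α ^ (1 - ((M : ℕ) : ℤ) - (k : ℤ)) ≤ α ^ (-((f i).1 : ℤ)) := by
            apply zpow_le_zpow_right₀ (le_of_lt hα)
            omega
        _ ≤ ∑ j ∈ Finset.range l, α ^ (-((f j).1 : ℤ)) :=
            Finset.single_le_sum (f := fun j => α ^ (-((f j).1 : ℤ)))
              (fun j _ => le_of_lt (zpow_pos hα0 _)) (Finset.mem_range.mpr hil)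


variable {X : Type*} [TopologicalSpace X] (CS : CellStructure X) {k : ℕ} {α : ℝ}

/-! ### list bridge -/

lemma listsum (g : ℕ × Set X → ℝ) :
    ∀ c : List (ℕ × Set X), (c.map g).sum = ∑ i ∈ Finset.range c.length, g (c.getD i (0, ∅)) := by
  intro c
  induction c with
  | nil => simp
  | cons e t ih =>
    simp only [List.map_cons, List.sum_cons, List.length_cons, Finset.sum_range_succ']
    simp only [List.getD_cons_succ, List.getD_cons_zero, ih]
    ring

lemma getD_last : ∀ (c : List (ℕ × Set X)) (e : ℕ × Set X), c.getLast? = some e →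
    c.getD (c.length - 1) (0, ∅) = e := by
  intro c
  induction c with
  | nil => intro e h; simp at h
  | cons a t ih =>
    intro e h
    match t, ih with
    | [], _ => simp only [List.getLast?_singleton] at h; simpa using h
    | b :: t', ih =>
      rw [List.getLast?_cons_cons] at h
      have := ih e h
      simpa using this

lemma chainWeight_ge (hα : 1 < α) (hα2 : α ^ k ≤ 2)
    (hk : ∀ n : ℕ, ∀ E₁ ∈ CS.cells n, ∀ E₂ ∈ CS.cells n, Disjoint E₁ E₂ →
      ∀ F ∈ CS.cells (n + k), ¬((E₁ ∩ F).Nonempty ∧ (E₂ ∩ F).Nonempty))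
    {p q : X} {n : ℕ} {A B : Set X} (hA : A ∈ CS.cells n) (hB : B ∈ CS.cells n)
    (hpA : p ∈ A) (hqB : q ∈ B) (hAB : Disjoint A B) {c : List (ℕ × Set X)}
    (hc : IsCellChain CS p q c) :
    α ^ (1 - (n : ℤ) - (k : ℤ)) ≤ chainWeight α c := by
  obtain ⟨hne, hcl, ⟨e₀, he₀, hpe⟩, ⟨e₁, he₁, hqe⟩, hch⟩ := hc
  set l := c.length with hl_def
  have hl1 : 1 ≤ l := List.length_pos_iff.mpr hne
  set f : ℕ → ℕ × Set X := fun i => c.getD i (0, ∅) with hf_def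
  have hgetD : ∀ i (hi : i < l), f i = c.get ⟨i, by omega⟩ := by
    intro i hi
    simp only [hf_def, List.getD_eq_getElem _ _ (show i < c.length by omega), List.get_eq_getElem]
  have hmain := chain_bound CS hα hα2 hk l l le_rfl f n n A B hA hB hAB hl1
    (fun i hi => by rw [hgetD i hi]; exact hcl _ (List.get_mem c ⟨i, by omega⟩))
    (⟨p, hpA, by
      have : f 0 = e₀ := by
        cases c with
        | nil => simp at hne
        | cons a t => simp only [List.head?_cons, Option.some.injEq] at he₀; simp [hf_def, ← he₀]
      rw [this]; exact hpe⟩)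
    (⟨q, hqB, by rw [show f (l - 1) = e₁ from getD_last c e₁ he₁]; exact hqe⟩)
    (fun i hi => by
      replace hch := List.isChain_iff_getElem.mp hch
      have h2 := hch i (by omega)
      rw [hgetD i (by omega), hgetD (i + 1) (by omega)]
      exact h2)
  have hmax : max n n = n := Nat.max_self n
  rw [hmax] at hmain
  rw [chainWeight, listsum]
  exact hmain

/-! ### basic chain facts -/

lemma chainWeight_nonneg (hα : 0 < α) (c : List (ℕ × Set X)) : 0 ≤ chainWeight α c := by
  apply List.sum_nonneg
  intro x hx
  obtain ⟨e, _, rfl⟩ := List.mem_map.mp hx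
  exact le_of_lt (zpow_pos hα _)

lemma single_chain {p q : X} {m : ℕ} {E : Set X} (hE : E ∈ CS.cells m)
    (hp : p ∈ E) (hq : q ∈ E) : IsCellChain CS p q [(m, E)] := by
  refine ⟨by simp, ?_, ⟨(m, E), rfl, hp⟩, ⟨(m, E), rfl, hq⟩, List.isChain_singleton _⟩
  intro e he
  simp only [List.mem_singleton] at he
  rw [he]
  exact hE

lemma chains_nonempty (p q : X) :
    {s : ℝ | ∃ c : List (ℕ × Set X), IsCellChain CS p q c ∧ chainWeight α c = s}.Nonempty := by
  refine ⟨chainWeight α [(0, Set.univ)], [(0, Set.univ)], ?_, rfl⟩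
  exact single_chain CS (by rw [CS.root]; rfl) (Set.mem_univ p) (Set.mem_univ q)

lemma chains_bddBelow (hα : 0 < α) (p q : X) :
    BddBelow {s : ℝ | ∃ c : List (ℕ × Set X), IsCellChain CS p q c ∧ chainWeight α c = s} := by
  refine ⟨0, ?_⟩
  rintro s ⟨c, _, rfl⟩
  exact chainWeight_nonneg hα c

lemma dAlpha_nonneg (hα : 0 < α) (p q : X) : 0 ≤ dAlpha CS α p q := by
  apply Real.sInf_nonneg
  rintro s ⟨c, _, rfl⟩
  exact chainWeight_nonneg hα c

lemma dAlpha_le (hα : 0 < α) {p q : X} {c : List (ℕ × Set X)} (hc : IsCellChain CS p q c) :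
    dAlpha CS α p q ≤ chainWeight α c :=
  csInf_le (chains_bddBelow CS hα p q) ⟨c, hc, rfl⟩

lemma dAlpha_ge (hα : 1 < α) (hα2 : α ^ k ≤ 2)
    (hk : ∀ n : ℕ, ∀ E₁ ∈ CS.cells n, ∀ E₂ ∈ CS.cells n, Disjoint E₁ E₂ →
      ∀ F ∈ CS.cells (n + k), ¬((E₁ ∩ F).Nonempty ∧ (E₂ ∩ F).Nonempty))
    {p q : X} {n : ℕ} (h : NoPairAt CS p q n) :
    α ^ (1 - (n : ℤ) - (k : ℤ)) ≤ dAlpha CS α p q := by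
  apply le_csInf (chains_nonempty CS p q)
  rintro s ⟨c, hc, rfl⟩
  obtain ⟨A, hA, hpA⟩ := exists_cell CS n p
  obtain ⟨B, hB, hqB⟩ := exists_cell CS n q
  have hAB : Disjoint A B := by
    rw [Set.disjoint_iff_inter_eq_empty, ← Set.not_nonempty_iff_eq_empty]
    exact h A hA B hB hpA hqB
  exact chainWeight_ge CS hα hα2 hk hA hB hpA hqB hAB hc

lemma dAlpha_refl (hα : 1 < α) (p : X) : dAlpha CS α p p = 0 := by
  have hα0 : (0:ℝ) < α := lt_trans one_pos hα
  refine le_antisymm ?_ (dAlpha_nonneg CS hα0 p p)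
  by_contra hcon
  push_neg at hcon
  obtain ⟨m, hm⟩ := exists_pow_lt_of_lt_one (y := α⁻¹) hcon (inv_lt_one_of_one_lt₀ hα)
  obtain ⟨E, hE, hpE⟩ := exists_cell CS m p
  have hle := dAlpha_le CS hα0 (single_chain CS hE hpE hpE)
  have hw : chainWeight α [(m, E)] = α⁻¹ ^ m := by
    simp [chainWeight, zpow_neg, zpow_natCast, inv_pow]
  rw [hw] at hle
  linarith

lemma cellchain_reverse {p q : X} {c : List (ℕ × Set X)} (h : IsCellChain CS p q c) :
    IsCellChain CS q p c.reverse := by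
  obtain ⟨hne, hcl, ⟨e₀, he₀, hpe⟩, ⟨e₁, he₁, hqe⟩, hch⟩ := h
  refine ⟨by simpa using hne, fun e he => hcl e (by simpa using he),
    ⟨e₁, ?_, hqe⟩, ⟨e₀, ?_, hpe⟩, ?_⟩
  · rw [List.head?_reverse]; exact he₁
  · rw [List.getLast?_reverse]; exact he₀
  · apply List.isChain_reverse.mpr
    exact List.IsChain.imp (fun a b hab => by rw [Set.inter_comm] at hab; exact hab) hch

lemma chainWeight_reverse (c : List (ℕ × Set X)) :
    chainWeight α c.reverse = chainWeight α c := by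
  rw [chainWeight, chainWeight, List.map_reverse, List.sum_reverse]

lemma dAlpha_symm (p q : X) : dAlpha CS α p q = dAlpha CS α q p := by
  have : ∀ x y : X,
      {s : ℝ | ∃ c : List (ℕ × Set X), IsCellChain CS x y c ∧ chainWeight α c = s} ⊆
      {s : ℝ | ∃ c : List (ℕ × Set X), IsCellChain CS y x c ∧ chainWeight α c = s} := by
    rintro x y s ⟨c, hc, rfl⟩
    exact ⟨c.reverse, cellchain_reverse CS hc, chainWeight_reverse c⟩
  rw [dAlpha, dAlpha]
  congr 1
  exact Set.Subset.antisymm (this p q) (this q p)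

lemma cellchain_append {x y z : X} {c₁ c₂ : List (ℕ × Set X)}
    (h₁ : IsCellChain CS x y c₁) (h₂ : IsCellChain CS y z c₂) :
    IsCellChain CS x z (c₁ ++ c₂) := by
  obtain ⟨hne₁, hcl₁, ⟨e₀, he₀, hxe⟩, ⟨e₁, he₁, hye⟩, hch₁⟩ := h₁
  obtain ⟨hne₂, hcl₂, ⟨f₀, hf₀, hyf⟩, ⟨f₁, hf₁, hzf⟩, hch₂⟩ := h₂
  refine ⟨by simp [hne₁], ?_, ⟨e₀, ?_, hxe⟩, ⟨f₁, ?_, hzf⟩, ?_⟩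
  · intro e he
    rcases List.mem_append.mp he with h | h
    exacts [hcl₁ e h, hcl₂ e h]
  · cases c₁ with
    | nil => exact absurd rfl hne₁
    | cons a t => simpa using he₀
  · rw [List.getLast?_append_of_ne_nil c₁ hne₂]; exact hf₁
  · refine List.IsChain.append hch₁ hch₂ ?_
    intro a ha b hb
    rw [he₁] at ha
    rw [hf₀] at hb
    simp only [Option.mem_def, Option.some.injEq] at ha hb
    subst ha; subst hb
    exact ⟨y, hye, hyf⟩

lemma chainWeight_append (c₁ c₂ : List (ℕ × Set X)) :
    chainWeight α (c₁ ++ c₂) = chainWeight α c₁ + chainWeight α c₂ := by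
  rw [chainWeight, chainWeight, chainWeight, List.map_append, List.sum_append]

lemma dAlpha_triangle (hα : 0 < α) (x y z : X) :
    dAlpha CS α x z ≤ dAlpha CS α x y + dAlpha CS α y z := by
  have key : ∀ s ∈ {s : ℝ | ∃ c, IsCellChain CS x y c ∧ chainWeight α c = s},
      ∀ t ∈ {s : ℝ | ∃ c, IsCellChain CS y z c ∧ chainWeight α c = s},
      dAlpha CS α x z ≤ s + t := by
    rintro s ⟨c₁, hc₁, rfl⟩ t ⟨c₂, hc₂, rfl⟩
    rw [← chainWeight_append]
    exact dAlpha_le CS hα (cellchain_append CS hc₁ hc₂)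
  have h1 : ∀ s ∈ {s : ℝ | ∃ c, IsCellChain CS x y c ∧ chainWeight α c = s},
      dAlpha CS α x z - s ≤ dAlpha CS α y z := by
    intro s hs
    apply le_csInf (chains_nonempty CS y z)
    intro t ht
    linarith [key s hs t ht]
  have h2 : dAlpha CS α x z - dAlpha CS α y z ≤ dAlpha CS α x y := by
    apply le_csInf (chains_nonempty CS x y)
    intro s hs
    linarith [h1 s hs]
  linarith


variable {X : Type*} [TopologicalSpace X] (CS : CellStructure X)

/-- König-type argument: if at every level there is an intersecting pair of cells
containing `p` and `q` respectively, then `p = q`. -/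
lemma eq_of_forall_not_noPair [T2Space X] (p q : X)
    (h : ∀ n, ¬ NoPairAt CS p q n) : p = q := by
  classical
  set S : ℕ → Set (Set X × Set X) := fun n =>
    {z | z.1 ∈ CS.cells n ∧ z.2 ∈ CS.cells n ∧ p ∈ z.1 ∧ q ∈ z.2 ∧ (z.1 ∩ z.2).Nonempty}
    with hS_def
  have hSne : ∀ n, ∃ z : Set X × Set X, z ∈ S n := by
    intro n
    have hn := h n
    simp only [NoPairAt] at hn
    push_neg at hn
    obtain ⟨Ex, hEx, Ey, hEy, hp, hq, hne⟩ := hn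
    exact ⟨(Ex, Ey), hEx, hEy, hp, hq, hne⟩
  have hSfin : ∀ n, (S n).Finite := by
    intro n
    apply ((CS.finite_cells n).prod (CS.finite_cells n)).subset
    intro z hz
    exact ⟨hz.1, hz.2.1⟩
  have hstep : ∀ (n : ℕ) (z : Set X × Set X), ∃ w, z ∈ S (n + 1) →
      w ∈ S n ∧ z.1 ⊆ w.1 ∧ z.2 ⊆ w.2 := by
    intro n z
    by_cases hz : z ∈ S (n + 1)
    · obtain ⟨h1, h2, h3, h4, h5⟩ := hz
      obtain ⟨P1, hP1, hs1⟩ := CS.exists_parent n z.1 h1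
      obtain ⟨P2, hP2, hs2⟩ := CS.exists_parent n z.2 h2
      exact ⟨(P1, P2), fun _ =>
        ⟨⟨hP1, hP2, hs1 h3, hs2 h4, h5.mono (Set.inter_subset_inter hs1 hs2)⟩, hs1, hs2⟩⟩
    · exact ⟨z, fun hz' => absurd hz' hz⟩
  choose par hpar using hstep
  choose z0 hz0 using hSne
  let down : ℕ → ℕ → Set X × Set X → Set X × Set X :=
    fun j => Nat.rec (fun _ w => w) (fun _ ih n w => par n (ih (n + 1) w)) j
  have down_succ : ∀ j n w, down (j + 1) n w = par n (down j (n + 1) w) := fun _ _ _ => rfl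
  have hdown : ∀ j n w, w ∈ S (n + j) → down j n w ∈ S n := by
    intro j
    induction j with
    | zero => intro n w hw; exact hw
    | succ j ih =>
      intro n w hw
      rw [down_succ]
      have hw' : w ∈ S ((n + 1) + j) := by rwa [show (n + 1) + j = n + (j + 1) by omega]
      exact (hpar n _ (ih (n + 1) w hw')).1
  set Z : ℕ → ℕ → Set X × Set X := fun n N => down (N - n) n (z0 N) with hZ_def
  have memZ : ∀ n N, n ≤ N → Z n N ∈ S n := by
    intro n N hnN
    have h0 : z0 N ∈ S (n + (N - n)) := by
      rw [show n + (N - n) = N by omega]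
      exact hz0 N
    exact hdown _ _ _ h0
  have coh : ∀ n N, n + 1 ≤ N → Z n N = par n (Z (n + 1) N) := by
    intro n N hnN
    show down (N - n) n (z0 N) = par n (down (N - (n + 1)) (n + 1) (z0 N))
    rw [show N - n = (N - (n + 1)) + 1 by omega, down_succ]
  set U : Ultrafilter ℕ := Ultrafilter.of Filter.atTop with hU_def
  have hU : ∀ n, {N | n ≤ N} ∈ U := fun n => Ultrafilter.of_le Filter.atTop (Filter.mem_atTop n)
  have hlim : ∀ n, ∃ w ∈ S n, {N | n ≤ N ∧ Z n N = w} ∈ U := by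
    intro n
    have hcover : {N | n ≤ N} ⊆ ⋃ w ∈ S n, {N | n ≤ N ∧ Z n N = w} := by
      intro N hN
      exact Set.mem_biUnion (memZ n N hN) ⟨hN, rfl⟩
    have hmem : (⋃ w ∈ S n, {N | n ≤ N ∧ Z n N = w}) ∈ U :=
      Filter.mem_of_superset (hU n) hcover
    exact (Ultrafilter.finite_biUnion_mem_iff (hSfin n)).mp hmem
  choose v hvS hvU using hlim
  have compat : ∀ n, v n = par n (v (n + 1)) := by
    intro n
    have hmem : ({N | n ≤ N ∧ Z n N = v n} ∩ {N | (n + 1) ≤ N ∧ Z (n + 1) N = v (n + 1)}) ∈ U :=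
      Filter.inter_mem (hvU n) (hvU (n + 1))
    obtain ⟨N, ⟨_, he1⟩, ⟨hn2, he2⟩⟩ := Ultrafilter.nonempty_of_mem hmem
    rw [← he1, ← he2, coh n N hn2]
  have subs : ∀ n, (v (n + 1)).1 ⊆ (v n).1 ∧ (v (n + 1)).2 ⊆ (v n).2 := by
    intro n
    have h2 := hpar n (v (n + 1)) (hvS (n + 1))
    rw [← compat n] at h2
    exact ⟨h2.2.1, h2.2.2⟩
  obtain ⟨p', hp'⟩ := CS.descending_singleton (fun n => (v n).1)
    (fun n => (hvS n).1) (fun n => (subs n).1)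
  obtain ⟨q', hq'⟩ := CS.descending_singleton (fun n => (v n).2)
    (fun n => (hvS n).2.1) (fun n => (subs n).2)
  have hpp : p' = p := by
    have hp2 : p ∈ ⋂ n, (v n).1 := Set.mem_iInter.mpr (fun n => (hvS n).2.2.1)
    rw [hp'] at hp2
    exact (Set.mem_singleton_iff.mp hp2).symm
  have hqq : q' = q := by
    have hq2 : q ∈ ⋂ n, (v n).2 := Set.mem_iInter.mpr (fun n => (hvS n).2.2.2.1)
    rw [hq'] at hq2
    exact (Set.mem_singleton_iff.mp hq2).symm
  have hGne : (⋂ n, (v n).1 ∩ (v n).2).Nonempty := by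
    apply IsCompact.nonempty_iInter_of_sequence_nonempty_isCompact_isClosed
    · exact fun n => Set.inter_subset_inter (subs n).1 (subs n).2
    · exact fun n => (hvS n).2.2.2.2
    · exact (CS.isCompact_cells 0 _ (hvS 0).1).inter_right
        (CS.isCompact_cells 0 _ (hvS 0).2.1).isClosed
    · exact fun n => ((CS.isCompact_cells n _ (hvS n).1).inter_right
        (CS.isCompact_cells n _ (hvS n).2.1).isClosed).isClosed
  obtain ⟨x, hx⟩ := hGne
  have hx1 : x ∈ ⋂ n, (v n).1 := Set.mem_iInter.mpr (fun n => (Set.mem_iInter.mp hx n).1)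
  have hx2 : x ∈ ⋂ n, (v n).2 := Set.mem_iInter.mpr (fun n => (Set.mem_iInter.mp hx n).2)
  rw [hp'] at hx1
  rw [hq'] at hx2
  rw [← hpp, ← hqq, ← Set.mem_singleton_iff.mp hx1, Set.mem_singleton_iff.mp hx2]


end Stmt6Aux

/-- If no two disjoint `n`-cells meet a common `(n+k)`-cell and
`1 < α ≤ (3/2)^{1/k}`, then `d_α` is a metric on `X`, and `d_α(p,q) ≥ α^{1-P(p,q)-k}`
for distinct `p, q`, where `P(p,q)` is the least level `n` admitting no intersecting
pair of `n`-cells containing `p` and `q`. -/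
theorem stmt6 {X : Type*} [TopologicalSpace X] [CompactSpace X] [ConnectedSpace X]
    [TopologicalSpace.MetrizableSpace X] (CS : CellStructure X) (k : ℕ)
    (hk : ∀ n : ℕ, ∀ E₁ ∈ CS.cells n, ∀ E₂ ∈ CS.cells n, Disjoint E₁ E₂ →
      ∀ F ∈ CS.cells (n + k), ¬((E₁ ∩ F).Nonempty ∧ (E₂ ∩ F).Nonempty))
    (α : ℝ) (hα₁ : 1 < α) (hα₂ : α ≤ (3 / 2 : ℝ) ^ ((k : ℝ))⁻¹) :
    IsMetricOn (dAlpha CS α) ∧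
      ∀ p q : X, p ≠ q → ∀ n : ℕ, NoPairAt CS p q n → (∀ m : ℕ, m < n → ¬NoPairAt CS p q m) →
        α ^ (1 - (n : ℤ) - (k : ℤ)) ≤ dAlpha CS α p q := by
  have hα0 : (0:ℝ) < α := lt_trans one_pos hα₁
  have hk1 : 1 ≤ k := by
    by_contra hc
    push_neg at hc
    have hk0 : k = 0 := by omega
    rw [hk0] at hα₂
    simp only [Nat.cast_zero, inv_zero, Real.rpow_zero] at hα₂
    linarith
  have hα2 : α ^ k ≤ 2 := by
    have h1 : α ^ k ≤ (3/2 : ℝ) := by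
      calc α ^ k ≤ ((3/2 : ℝ) ^ ((k : ℝ))⁻¹) ^ k := pow_le_pow_left₀ (le_of_lt hα0) hα₂ k
        _ = 3/2 := Real.rpow_inv_natCast_pow (by norm_num) (by omega)
    linarith
  refine ⟨⟨fun x y => Stmt6Aux.dAlpha_nonneg CS hα0 x y, ?_,
    fun x y => Stmt6Aux.dAlpha_symm CS x y,
    fun x y z => Stmt6Aux.dAlpha_triangle CS hα0 x y z⟩, ?_⟩
  · intro x y
    constructor
    · intro h0
      by_contra hxy
      have hex : ∃ n, NoPairAt CS x y n := by
        by_contra hno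
        push_neg at hno
        exact hxy (Stmt6Aux.eq_of_forall_not_noPair CS x y hno)
      obtain ⟨n, hn⟩ := hex
      have hge := Stmt6Aux.dAlpha_ge CS hα₁ hα2 hk hn
      rw [h0] at hge
      exact absurd hge (not_le.mpr (zpow_pos hα0 _))
    · rintro rfl
      exact Stmt6Aux.dAlpha_refl CS hα₁ x
  · intro p q _ n hn _
    exact Stmt6Aux.dAlpha_ge CS hα₁ hα2 hk hn
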